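/- Normal form in the quotient ring: the quotient B[X_i : i ∈ ℤ]/𝒫 is a free B-module, and a basis is given by the residue classes of the reduced monomials ∏_{i∈ℤ} X_i^{j_i}, where j : ℤ → {0, 1, …, q−1} ranges over the finitely supported functions. In particular, every element of the quotient has a unique representative which is a B-linear combination of monomials in which every variable X_i occurs with exponent at most q−1. -/

import Mathlib

set_option maxHeartbeats 1000000

/-- The ideal generated by the elements `X i ^ q + Θ * X i - X (i-1)` (i ∈ ℤ) in the
polynomial ring over an integral domain `B` in the variables `X i`, `i ∈ ℤ`. -/
noncomputable def carlitzIdeal (B : Type*) [CommRing B] (q : ℕ) (Θ : B) : Ideal (MvPolynomial ℤ B) :=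
  Ideal.span (Set.range fun i : ℤ =>
    MvPolynomial.X i ^ q + MvPolynomial.C Θ * MvPolynomial.X i - MvPolynomial.X (i - 1))


lemma digits_inj (q : ℕ) (hq : 2 ≤ q) : ∀ (M : ℕ) (a b : ℕ → ℕ), (∀ k, a k < q) → (∀ k, b k < q) →
    (∑ k ∈ Finset.range M, a k * q ^ k) = (∑ k ∈ Finset.range M, b k * q ^ k) →
    ∀ k < M, a k = b k := by
  intro M
  induction M with
  | zero => omega
  | succ M ih =>
    intro a b ha hb h k hk
    rw [Finset.sum_range_succ', Finset.sum_range_succ'] at h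
    simp only [pow_zero, mul_one, pow_succ'] at h
    have ha' : ∀ k, a (k + 1) * (q * q ^ k) = q * (a (k+1) * q ^ k) := fun k => by ring
    have hb' : ∀ k, b (k + 1) * (q * q ^ k) = q * (b (k+1) * q ^ k) := fun k => by ring
    simp only [ha', hb', ← Finset.mul_sum] at h
    have h0 : a 0 = b 0 := by
      have := congrArg (· % q) h
      simpa [Nat.mul_add_mod, Nat.add_mul_mod_self_left,
        Nat.mod_eq_of_lt (ha 0), Nat.mod_eq_of_lt (hb 0)] using this
    have h1 : (∑ k ∈ Finset.range M, a (k+1) * q ^ k) = ∑ k ∈ Finset.range M, b (k+1) * q ^ k := by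
      have hq0 : 0 < q := by omega
      have := h
      rw [h0] at this
      have h2 : q * (∑ k ∈ Finset.range M, a (k+1) * q ^ k) = q * ∑ k ∈ Finset.range M, b (k+1) * q ^ k := by omega
      exact Nat.eq_of_mul_eq_mul_left hq0 h2
    rcases k with _ | k
    · exact h0
    · exact ih (fun k => a (k+1)) (fun k => b (k+1)) (fun k => ha _) (fun k => hb _) h1 k (by omega)

lemma monic_indep {K : Type*} [Field K] {ι : Type*} (s : Finset ι) (f : ι → Polynomial K)
    (c : ι → K) (hm : ∀ i ∈ s, (f i).Monic)
    (hd : ∀ i ∈ s, ∀ j ∈ s, (f i).natDegree = (f j).natDegree → i = j)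
    (h : ∑ i ∈ s, c i • f i = 0) : ∀ i ∈ s, c i = 0 := by
  classical
  by_contra hc
  push_neg at hc
  obtain ⟨i1, hi1s, hi1⟩ := hc
  have hne : (s.filter fun i => c i ≠ 0).Nonempty := ⟨i1, Finset.mem_filter.2 ⟨hi1s, hi1⟩⟩
  obtain ⟨i0, hi0, hmax⟩ := Finset.exists_max_image _ (fun i => (f i).natDegree) hne
  rw [Finset.mem_filter] at hi0
  have hco := congrArg (fun P => Polynomial.coeff P ((f i0).natDegree)) h
  simp only [Polynomial.finset_sum_coeff, Polynomial.coeff_smul, Polynomial.coeff_zero,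
    smul_eq_mul] at hco
  rw [Finset.sum_eq_single i0 ?h1 ?h2] at hco
  · rw [(hm i0 hi0.1).coeff_natDegree, mul_one] at hco
    exact hi0.2 hco
  case h1 =>
    intro j hjs hji
    by_cases hcj : c j = 0
    · rw [hcj, zero_mul]
    · have hle : (f j).natDegree ≤ (f i0).natDegree :=
        hmax j (Finset.mem_filter.2 ⟨hjs, hcj⟩)
      have hne' : (f j).natDegree ≠ (f i0).natDegree := fun he => hji (hd j hjs i0 hi0.1 he)
      rw [Polynomial.coeff_eq_zero_of_natDegree_lt (lt_of_le_of_ne hle hne'), mul_zero]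
  case h2 => intro hi0'; exact absurd hi0.1 hi0'


open Polynomial in
lemma deg_aux {R : Type*} [CommRing R] [Nontrivial R] (q : ℕ) (hq : 2 ≤ q) (a b : R) :
    (X ^ q + (C a * X + C b)).degree = (q : WithBot ℕ) ∧ (X ^ q + (C a * X + C b)).Monic := by
  have hlt : (C a * X + C b).degree < (X ^ q : R[X]).degree := by
    rw [degree_X_pow]
    refine lt_of_le_of_lt (degree_linear_le) ?_
    exact_mod_cast (by omega : 1 < q)
  constructor
  · rw [degree_add_eq_left_of_degree_lt hlt, degree_X_pow]
  · exact (monic_X_pow q).add_of_left hlt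

universe u
open Polynomial in
lemma carlitz_construct {B : Type u} [CommRing B] [IsDomain B] (q : ℕ) (hq : 2 ≤ q) (Θ : B) :
    ∃ (F : Type u) (_ : Field F) (_ : Algebra B F) (x : ℤ → F),
      (∀ i : ℤ, x i ^ q + algebraMap B F Θ * x i = x (i - 1)) ∧
      (∀ (N : ℕ) (s : Finset (ℤ →₀ ℕ)) (c : (ℤ →₀ ℕ) → B),
        (∀ j ∈ s, ∀ i, j i < q) → (∀ j ∈ s, ∀ i ∈ j.support, (i : ℤ) ≤ (N : ℤ)) →
        (∑ j ∈ s, c j • (j.prod fun i e => x i ^ e)) = 0 → ∀ j ∈ s, c j = 0) := by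
  classical
  let K := FractionRing B
  haveI : IsScalarTower B K (RatFunc K) := IsScalarTower.of_algebraMap_eq fun b => by
    rw [IsScalarTower.algebraMap_apply B (Polynomial K) (RatFunc K),
      IsScalarTower.algebraMap_apply K (Polynomial K) (RatFunc K),
      IsScalarTower.algebraMap_apply B K (Polynomial K)]
  let F := AlgebraicClosure (RatFunc K)
  let t : F := algebraMap (RatFunc K) F RatFunc.X
  have ht : Transcendental K t := by
    rw [transcendental_algebraMap_iff (algebraMap (RatFunc K) F).injective,
      ← RatFunc.algebraMap_X, transcendental_algebraMap_iff
      (IsFractionRing.injective (Polynomial K) (RatFunc K))]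
    exact Polynomial.transcendental_X K
  set ΘF : F := algebraMap B F Θ with hΘF
  -- roots
  have hroot : ∀ cc : F, ∃ y : F, y ^ q + ΘF * y = cc := by
    intro cc
    obtain ⟨hdeg, -⟩ := deg_aux q hq ΘF (-cc)
    obtain ⟨y, hy⟩ := IsAlgClosed.exists_root (X ^ q + (C ΘF * X + C (-cc))) (by
      rw [hdeg]; exact_mod_cast (by omega : q ≠ 0))
    refine ⟨y, ?_⟩
    have : y ^ q + (ΘF * y + (-cc)) = 0 := by simpa using hy
    linear_combination this
  choose r hr using hroot
  set sfun : ℕ → F := fun n => Nat.rec t (fun _ y => r y) n with hsfun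
  have hsrec : ∀ n, (sfun (n+1)) ^ q + ΘF * sfun (n+1) = sfun n := fun n => hr (sfun n)
  -- transcendence of sfun
  set θK : K := algebraMap B K Θ with hθK
  have hθKF : algebraMap K F θK = ΘF := by
    rw [hθK, hΘF, IsScalarTower.algebraMap_apply B K F]
  have hstrans : ∀ n, Transcendental K (sfun n) := by
    intro n
    induction n with
    | zero => exact ht
    | succ n ih =>
      have he : sfun n = Polynomial.aeval (sfun (n+1)) (X ^ q + C θK * X) := by
        rw [map_add, map_mul, aeval_X, aeval_C, map_pow, aeval_X, hθKF, hsrec]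
      rw [he] at ih
      exact (transcendental_aeval_iff.mp ih).1
  -- x : ℤ → F
  set Pev : F → F := fun y => y ^ q + ΘF * y with hPev
  set x : ℤ → F := fun i => if 0 ≤ i then sfun i.toNat else Pev^[(-i).toNat] t with hxdef
  have hxneg : ∀ i : ℤ, i ≤ 0 → x i = Pev^[(-i).toNat] t := by
    intro i hi
    by_cases h0 : 0 ≤ i
    · have : i = 0 := le_antisymm hi h0
      subst this
      simp only [hxdef, if_pos le_rfl, Int.toNat_zero, neg_zero, Function.iterate_zero, id]
      rfl
    · simp [hxdef, h0]
  have hxnat : ∀ N : ℕ, x (N : ℤ) = sfun N := by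
    intro N; simp [hxdef]
  have hx : ∀ i : ℤ, Pev (x i) = x (i - 1) := by
    intro i
    rcases le_or_gt i 0 with hi | hi
    · rw [hxneg i hi, hxneg (i-1) (by omega), ← Function.iterate_succ_apply' Pev]
      congr 1
      omega
    · have h1 : x i = sfun i.toNat := by simp [hxdef, hi.le]
      have h2 : x (i - 1) = sfun (i - 1).toNat := by simp [hxdef]; intro h; omega
      have h3 : i.toNat = (i - 1).toNat + 1 := by omega
      rw [h1, h2, h3]
      exact hsrec _
  -- iterates
  set f0 : K[X] := X ^ q + C θK * X with hf0
  have hf0' : f0 = X ^ q + (C θK * X + C 0) := by rw [hf0, map_zero, add_zero]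
  have hf0m : f0.Monic := by rw [hf0']; exact (deg_aux q hq θK 0).2
  have hf0d : f0.natDegree = q := by
    rw [hf0']
    exact natDegree_eq_of_degree_eq_some (deg_aux q hq θK 0).1
  set g : ℕ → K[X] := fun k => Nat.rec X (fun _ p => f0.comp p) k with hg
  have hgmd : ∀ k, (g k).Monic ∧ (g k).natDegree = q ^ k := by
    intro k
    induction k with
    | zero => exact ⟨monic_X, natDegree_X⟩
    | succ k ih =>
      have hd : (g (k+1)).natDegree = q ^ (k+1) := by
        show (f0.comp (g k)).natDegree = q ^ (k + 1)
        rw [natDegree_comp, hf0d, ih.2, pow_succ, mul_comm]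
      refine ⟨?_, hd⟩
      show (f0.comp (g k)).Monic
      exact hf0m.comp ih.1 (by rw [ih.2]; positivity)
  have hxg : ∀ (N k : ℕ), Polynomial.aeval (x (N : ℤ)) (g k) = x ((N : ℤ) - k) := by
    intro N k
    induction k with
    | zero =>
      show Polynomial.aeval (x (N:ℤ)) X = x ((N:ℤ) - (0:ℕ))
      rw [aeval_X]
      norm_num
    | succ k ih =>
      show Polynomial.aeval (x (N:ℤ)) (f0.comp (g k)) = _
      rw [aeval_comp, ih]
      have : Polynomial.aeval (x ((N:ℤ) - k)) f0 = Pev (x ((N:ℤ) - k)) := by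
        rw [hf0, map_add, map_mul, aeval_X, aeval_C, map_pow, aeval_X, hθKF, hPev]
      rw [this, hx]
      congr 1
      omega
  refine ⟨F, inferInstance, inferInstance, x, ?_, ?_⟩
  · intro i
    have := hx i
    rw [hPev] at this
    exact this
  · intro N s c hred hNbd hsum
    set Msup : ℕ := s.sup fun j => j.support.sup fun i => (-i).toNat with hMsup
    set M : ℕ := N + 1 + Msup with hMdef
    have hM : ∀ j ∈ s, ∀ i ∈ j.support, ((N:ℤ) - i).toNat < M := by
      intro j hj i hi
      have h1 : (-i).toNat ≤ Msup :=
        le_trans (Finset.le_sup (f := fun i : ℤ => (-i).toNat) hi)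
          (Finset.le_sup (f := fun j : ℤ →₀ ℕ => j.support.sup fun i => (-i).toNat) hj)
      omega
    set Qp : (ℤ →₀ ℕ) → K[X] := fun j => j.prod fun i e => (g ((N:ℤ) - i).toNat) ^ e with hQp
    have heval : ∀ j ∈ s, Polynomial.aeval (x (N:ℤ)) (Qp j) = j.prod fun i e => x i ^ e := by
      intro j hj
      simp only [hQp, Finsupp.prod]
      rw [map_prod]
      refine Finset.prod_congr rfl fun i hi => ?_
      rw [map_pow, hxg N (((N:ℤ) - i).toNat)]
      have hle : i ≤ (N:ℤ) := hNbd j hj i hi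
      have hcast : (N:ℤ) - (((N:ℤ) - i).toNat : ℤ) = i := by omega
      rw [hcast]
    have hmon : ∀ j ∈ s, (Qp j).Monic := by
      intro j hj
      simp only [hQp, Finsupp.prod]
      refine monic_prod_of_monic _ _ fun i _ => ?_
      exact ((hgmd _).1).pow _
    have hdeg2 : ∀ j ∈ s, (Qp j).natDegree =
        ∑ k ∈ Finset.range M, j ((N:ℤ) - k) * q ^ k := by
      intro j hj
      have hdeg1 : (Qp j).natDegree = ∑ i ∈ j.support, j i * q ^ ((N:ℤ) - i).toNat := by
        simp only [hQp, Finsupp.prod]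
        rw [Polynomial.natDegree_prod _ _ (fun i _ => (((hgmd _).1).pow (j i)).ne_zero)]
        refine Finset.sum_congr rfl fun i hi => ?_
        rw [Polynomial.natDegree_pow, (hgmd _).2]
      rw [hdeg1]
      set T : Finset ℤ := (Finset.range M).image (fun k : ℕ => (N:ℤ) - k) with hT
      have hsub : j.support ⊆ T := by
        intro i hi
        rw [hT]
        refine Finset.mem_image.2 ⟨((N:ℤ) - i).toNat, Finset.mem_range.2 (hM j hj i hi), ?_⟩
        have := hNbd j hj i hi
        omega
      rw [Finset.sum_subset hsub (fun i _ hins => by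
        rw [Finsupp.notMem_support_iff.1 hins, zero_mul]), hT,
        Finset.sum_image (fun k1 _ k2 _ h => by omega)]
      refine Finset.sum_congr rfl fun k hk => ?_
      have : ((N:ℤ) - ((N:ℤ) - k)).toNat = k := by omega
      rw [this]
    have hinj : ∀ j1 ∈ s, ∀ j2 ∈ s, (Qp j1).natDegree = (Qp j2).natDegree → j1 = j2 := by
      intro j1 hj1 j2 hj2 hnd
      rw [hdeg2 j1 hj1, hdeg2 j2 hj2] at hnd
      have dig := digits_inj q hq M (fun k => j1 ((N:ℤ) - k)) (fun k => j2 ((N:ℤ) - k))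
        (fun k => hred j1 hj1 _) (fun k => hred j2 hj2 _) hnd
      ext i
      by_cases hiN : i ≤ (N:ℤ)
      · by_cases hk : ((N:ℤ) - i).toNat < M
        · have hik : (N:ℤ) - (((N:ℤ) - i).toNat : ℤ) = i := by omega
          have hd2 := dig (((N:ℤ) - i).toNat) hk
          rwa [hik] at hd2
        · have h1 : j1 i = 0 := by
            by_contra h
            exact hk (hM j1 hj1 i (Finsupp.mem_support_iff.2 h))
          have h2 : j2 i = 0 := by
            by_contra h
            exact hk (hM j2 hj2 i (Finsupp.mem_support_iff.2 h))
          rw [h1, h2]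
      · have h1 : j1 i = 0 := by
          by_contra h
          exact hiN (hNbd j1 hj1 i (Finsupp.mem_support_iff.2 h))
        have h2 : j2 i = 0 := by
          by_contra h
          exact hiN (hNbd j2 hj2 i (Finsupp.mem_support_iff.2 h))
        rw [h1, h2]
    set cK : (ℤ →₀ ℕ) → K := fun j => algebraMap B K (c j) with hcK
    have haeval0 : Polynomial.aeval (x (N:ℤ)) (∑ j ∈ s, cK j • Qp j) = 0 := by
      rw [map_sum, ← hsum]
      refine Finset.sum_congr rfl fun j hj => ?_
      have e1 : (Polynomial.aeval (x (N:ℤ))) (cK j • Qp j)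
          = cK j • (Polynomial.aeval (x (N:ℤ)) (Qp j)) := map_smul _ _ _
      rw [e1, heval j hj, hcK, Algebra.smul_def, Algebra.smul_def,
        ← IsScalarTower.algebraMap_apply B K F]
    have hxNt : Transcendental K (x (N:ℤ)) := by
      rw [hxnat]
      exact hstrans N
    have hP : ∑ j ∈ s, cK j • Qp j = 0 := by
      by_contra h0
      exact hxNt ⟨_, h0, haeval0⟩
    intro j hj
    have := monic_indep s Qp cK hmon hinj hP j hj
    exact IsFractionRing.injective B K (by rw [map_zero]; exact this)


open MvPolynomial in
lemma carlitz_span {B : Type*} [CommRing B] (q : ℕ) (hq : 2 ≤ q) (Θ : B) (n : ℕ) :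
    ∀ d : ℤ →₀ ℕ, d.sum (fun _ m => m) ≤ n →
      Ideal.Quotient.mk (carlitzIdeal B q Θ) (monomial d 1)
      ∈ Submodule.span B (Set.range fun j : {j : ℤ →₀ ℕ // ∀ i, j i < q} =>
          Ideal.Quotient.mk (carlitzIdeal B q Θ) (monomial j.1 (1 : B))) := by
  induction n with
  | zero =>
    intro d hd
    by_cases hred : ∀ i, d i < q
    · exact Submodule.subset_span ⟨⟨d, hred⟩, rfl⟩
    · push_neg at hred
      obtain ⟨i, hi⟩ := hred
      exfalso
      have hmem : i ∈ d.support := Finsupp.mem_support_iff.2 (by omega)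
      have : d i ≤ d.sum (fun _ m => m) :=
        Finset.single_le_sum (f := fun a => d a) (fun _ _ => Nat.zero_le _) hmem
      omega
  | succ n ih =>
    intro d hd
    by_cases hred : ∀ i, d i < q
    · exact Submodule.subset_span ⟨⟨d, hred⟩, rfl⟩
    · push_neg at hred
      obtain ⟨i, hi⟩ := hred
      set d' : ℤ →₀ ℕ := d - Finsupp.single i q with hd'
      have hle : Finsupp.single i q ≤ d := by
        rw [Finsupp.single_le_iff]; exact hi
      have h1 : d' + Finsupp.single i q = d := tsub_add_cancel_of_le hle
      -- degree bookkeeping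
      have hsum_add : ∀ (a b : ℤ →₀ ℕ), (a + b).sum (fun _ m => m) =
          a.sum (fun _ m => m) + b.sum (fun _ m => m) := fun a b =>
        Finsupp.sum_add_index' (fun _ => rfl) (fun _ _ _ => rfl)
      have hsingle : ∀ (i' : ℤ) (k : ℕ), (Finsupp.single i' k).sum (fun _ m => m) = k :=
        fun i' k => Finsupp.sum_single_index rfl
      have hdeg : d'.sum (fun _ m => m) + q = d.sum (fun _ m => m) := by
        rw [← h1, hsum_add, hsingle]
      -- key identity in the polynomial ring
      have key : (monomial d (1:B)) =
          monomial d' 1 * (X i ^ q + C Θ * X i - X (i-1))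
          + monomial (d' + Finsupp.single (i-1) 1) 1
          - C Θ * monomial (d' + Finsupp.single i 1) 1 := by
        have e1 : monomial d' (1:B) * X i ^ q = monomial d 1 := by
          rw [X_pow_eq_monomial, monomial_mul, mul_one, h1]
        have e2 : monomial d' (1:B) * X (i-1) = monomial (d' + Finsupp.single (i-1) 1) 1 := by
          rw [← pow_one (X (i-1) : MvPolynomial ℤ B), X_pow_eq_monomial, monomial_mul, mul_one]
        have e0 : monomial d' (1:B) * X i = monomial (d' + Finsupp.single i 1) 1 := by
          rw [← pow_one (X i : MvPolynomial ℤ B), X_pow_eq_monomial, monomial_mul, mul_one]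
        have e3 : C Θ * monomial (d' + Finsupp.single i 1) (1:B) = monomial d' 1 * (C Θ * X i) := by
          rw [mul_left_comm, e0]
        rw [mul_sub, mul_add, e1, e2, e3]
        ring
      have hgen : monomial d' (1:B) * (X i ^ q + C Θ * X i - X (i-1)) ∈ carlitzIdeal B q Θ :=
        Ideal.mul_mem_left _ _ (Ideal.subset_span ⟨i, rfl⟩)
      have hmk : Ideal.Quotient.mk (carlitzIdeal B q Θ) (monomial d 1) =
          Ideal.Quotient.mk (carlitzIdeal B q Θ) (monomial (d' + Finsupp.single (i-1) 1) 1)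
          - Θ • Ideal.Quotient.mk (carlitzIdeal B q Θ) (monomial (d' + Finsupp.single i 1) 1) := by
        have hsm : Θ • Ideal.Quotient.mk (carlitzIdeal B q Θ) (monomial (d' + Finsupp.single i 1) (1:B))
            = Ideal.Quotient.mk (carlitzIdeal B q Θ) (C Θ * monomial (d' + Finsupp.single i 1) 1) := by
          rw [← Ideal.Quotient.mkₐ_eq_mk B, ← map_smul, smul_eq_C_mul]
        rw [hsm, key, map_sub, map_add, Ideal.Quotient.eq_zero_iff_mem.2 hgen, zero_add]
      rw [hmk]
      have hb1 : (d' + Finsupp.single (i-1) 1).sum (fun _ m => m) ≤ n := by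
        rw [hsum_add, hsingle]; omega
      have hb2 : (d' + Finsupp.single i 1).sum (fun _ m => m) ≤ n := by
        rw [hsum_add, hsingle]; omega
      exact Submodule.sub_mem _ (ih _ hb1) (Submodule.smul_mem _ _ (ih _ hb2))


open MvPolynomial in
/-- Normal form in the quotient ring: the quotient is a free `B`-module with basis given
by the residue classes of the reduced monomials `∏ i, X i ^ j i`, where `j : ℤ →₀ ℕ`
ranges over the finitely supported functions with values in `{0, 1, …, q-1}`. -/
theorem stmt_3 {B : Type*} [CommRing B] [IsDomain B]
    (p q e : ℕ) (hp : p.Prime) (he : 0 < e) (hq : q = p ^ e) (Θ : B) :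
    ∃ b : Module.Basis {j : ℤ →₀ ℕ // ∀ i, j i < q} B
        (MvPolynomial ℤ B ⧸ carlitzIdeal B q Θ),
      ∀ j, b j = Ideal.Quotient.mk (carlitzIdeal B q Θ)
        (MvPolynomial.monomial j.1 (1 : B)) := by
  classical
  have hq2 : 2 ≤ q := by
    rw [hq]
    calc 2 ≤ p := hp.two_le
    _ ≤ p ^ e := Nat.le_self_pow he.ne' p
  obtain ⟨F, _, _, x, hrel, hindep⟩ := carlitz_construct q hq2 Θ
  set I := carlitzIdeal B q Θ with hI
  have hgen : ∀ a ∈ I, MvPolynomial.aeval x a = 0 := by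
    intro a ha
    have hle : I ≤ RingHom.ker (MvPolynomial.aeval (R := B) x).toRingHom := by
      rw [hI, carlitzIdeal]
      refine Ideal.span_le.mpr ?_
      rintro _ ⟨i, rfl⟩
      rw [SetLike.mem_coe, RingHom.mem_ker]
      have : MvPolynomial.aeval x (X i ^ q + C Θ * X i - X (i-1))
          = x i ^ q + algebraMap B F Θ * x i - x (i - 1) := by
        simp [map_sub, map_add, map_mul, map_pow]
      rw [AlgHom.toRingHom_eq_coe, RingHom.coe_coe, this, hrel i, sub_self]
    exact RingHom.mem_ker.1 (hle ha)
  set ψ : (MvPolynomial ℤ B ⧸ I) →ₐ[B] F := Ideal.Quotient.liftₐ I (MvPolynomial.aeval x) hgen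
    with hψ
  set v : {j : ℤ →₀ ℕ // ∀ i, j i < q} → MvPolynomial ℤ B ⧸ I :=
    fun j => Ideal.Quotient.mk I (monomial j.1 (1 : B)) with hv
  have hψv : ∀ j, ψ (v j) = j.1.prod fun i e => x i ^ e := by
    intro j
    rw [hψ, hv, Ideal.Quotient.liftₐ_apply]
    erw [Ideal.Quotient.lift_mk]
    simp [aeval_monomial]
  have hli : LinearIndependent B v := by
    apply LinearIndependent.of_comp ψ.toLinearMap
    rw [linearIndependent_iff']
    intro s gco hsum j hj
    set N : ℕ := s.sup fun j => j.1.support.sup fun i => i.toNat with hN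
    set s' : Finset (ℤ →₀ ℕ) := s.image (fun j => j.1) with hs'
    set c' : (ℤ →₀ ℕ) → B := fun d => if h : ∀ i, d i < q then gco ⟨d, h⟩ else 0 with hc'
    have hred : ∀ d ∈ s', ∀ i, d i < q := by
      intro d hd
      obtain ⟨j, hjs, rfl⟩ := Finset.mem_image.1 hd
      exact j.2
    have hNbd : ∀ d ∈ s', ∀ i ∈ d.support, (i : ℤ) ≤ (N : ℤ) := by
      intro d hd i hi
      obtain ⟨j, hjs, rfl⟩ := Finset.mem_image.1 hd
      have h1 : i.toNat ≤ N := by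
        refine le_trans (Finset.le_sup (f := fun i : ℤ => i.toNat) hi) ?_
        exact Finset.le_sup (f := fun j : {j : ℤ →₀ ℕ // ∀ i, j i < q} =>
          j.1.support.sup fun i => i.toNat) hjs
      omega
    have hinjval : ∀ j1 ∈ s, ∀ j2 ∈ s,
        (j1 : {j : ℤ →₀ ℕ // ∀ i, j i < q}).1 = (j2 : {j : ℤ →₀ ℕ // ∀ i, j i < q}).1
          → j1 = j2 := fun j1 _ j2 _ h => Subtype.ext h
    have hsum' : (∑ d ∈ s', c' d • (d.prod fun i e => x i ^ e)) = 0 := by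
      rw [hs', Finset.sum_image hinjval, ← hsum]
      refine Finset.sum_congr rfl fun j hjs => ?_
      have : c' j.1 = gco j := by rw [hc']; simp [j.2]
      rw [this]
      congr 1
      exact (hψv j).symm
    have := hindep N s' c' hred hNbd hsum' j.1 (Finset.mem_image_of_mem _ hj)
    rw [hc'] at this
    simpa [j.2] using this
  have hspan : ⊤ ≤ Submodule.span B (Set.range v) := by
    intro y _
    obtain ⟨f, rfl⟩ := Ideal.Quotient.mk_surjective y
    rw [MvPolynomial.as_sum f, map_sum]
    refine Submodule.sum_mem _ fun d hd => ?_
    have hmon : (monomial d) (coeff d f) = (coeff d f) • (monomial d (1 : B)) := by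
      rw [MvPolynomial.smul_monomial, smul_eq_mul, mul_one]
    have : (Ideal.Quotient.mk I) (monomial d (coeff d f))
        = (coeff d f) • (Ideal.Quotient.mk I (monomial d (1 : B))) := by
      rw [hmon, ← Ideal.Quotient.mkₐ_eq_mk B, map_smul]
    rw [this]
    exact Submodule.smul_mem _ _ (carlitz_span q hq2 Θ _ d le_rfl)
  refine ⟨Module.Basis.mk hli hspan, fun j => ?_⟩
  rw [Module.Basis.mk_apply]
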